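/- Let N be a positive integer, i ∈ {0, 1, …, N−1}, γ ∈ ℂ with |γ| = 1, and K ⊂ ℂ compact. Assume: (i) the family {(Q_{nN+i}^{z,γ} : n ≥ 1) : z ∈ K} is uniformly non-degenerated; and (ii) there exist c′₁ > 0, c′₂ > 0 and M′ ≥ 1 such that for all α ∈ ℂ² with ‖α‖ = 1, all z ∈ K and all n ≥ M′ one has c′₁ ≤ |S_n^γ(α, z)| ≤ c′₂. Then there exists c > 1 such that for all z ∈ K, all n ≥ 1 and every generalised eigenvector u associated with z: c⁻¹(|u_0|² + |u_1|²) ≤ |a_{(n+1)N+i−1}|·(|u_{nN+i−1}|² + |u_{nN+i}|²) ≤ c·(|u_0|² + |u_1|²). -/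

import Mathlib

open Filter Matrix Topology

noncomputable section

/-- The operator norm of a 2×2 complex matrix (as operator on Euclidean ℂ²). -/
noncomputable def opNorm (X : Matrix (Fin 2) (Fin 2) ℂ) : ℝ :=
  ‖Matrix.toEuclideanCLM (𝕜 := ℂ) X‖

/-- Entrywise complex conjugation of a matrix. -/
def mconj (X : Matrix (Fin 2) (Fin 2) ℂ) : Matrix (Fin 2) (Fin 2) ℂ :=
  X.map (starRingEnd ℂ)

/-- Hermitian symmetrisation. -/
def symQ (X : Matrix (Fin 2) (Fin 2) ℂ) : Matrix (Fin 2) (Fin 2) ℂ :=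
  (2⁻¹ : ℂ) • (X + Xᴴ)

def Ematrix : Matrix (Fin 2) (Fin 2) ℂ := !![0, -1; 1, 0]

/-- One-step transfer matrix `B_j(z)`. -/
def Bmat (a b : ℕ → ℂ) (j : ℕ) (z : ℂ) : Matrix (Fin 2) (Fin 2) ℂ :=
  !![0, 1; -(a (j-1) / a j), (z - b j) / a j]

/-- `N`-step transfer matrix `X_n(z) = B_{n+N-1}(z) ⋯ B_n(z)`. -/
def transfer (a b : ℕ → ℂ) (N n : ℕ) (z : ℂ) : Matrix (Fin 2) (Fin 2) ℂ :=
  (((List.range N).map fun j => Bmat a b (n + j) z).reverse).prod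

/-- Generalised eigenvector associated with `z`. -/
def IsGenEigen (a b : ℕ → ℂ) (z : ℂ) (u : ℕ → ℂ) : Prop :=
  ¬(u 0 = 0 ∧ u 1 = 0) ∧
    ∀ n, 1 ≤ n → z * u n = a n * u (n+1) + b n * u n + a (n-1) * u (n-1)

/-- The twisted Stolz class `D̃₁(K, GL(2,ℂ))`. -/
def MemD1K (K : Set ℂ) (Y : ℕ → ℂ → Matrix (Fin 2) (Fin 2) ℂ) : Prop :=
  (∀ n, 1 ≤ n → ContinuousOn (Y n) K) ∧
  (∀ n, 1 ≤ n → ∀ z ∈ K, IsUnit (Y n z)) ∧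
  (∃ C : ℝ, ∀ n, 1 ≤ n → ∀ z ∈ K, opNorm (Y n z) ≤ C) ∧
  (∃ g : ℕ → ℝ, Summable g ∧ ∀ n, 1 ≤ n → ∀ z ∈ K,
      opNorm (Y (n+1) z - mconj (Y n z)) ≤ g n)

/-- The twisted Stolz class `D̃₁(ℂ)` for scalar sequences `(x_n : n ≥ 1)`. -/
def MemD1 (x : ℕ → ℂ) : Prop :=
  (∃ C : ℝ, ∀ n, 1 ≤ n → ‖x n‖ ≤ C) ∧
    Summable (fun n : ℕ => ‖x (n+2) - (starRingEnd ℂ) (x (n+1))‖)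

def MemD1N (N : ℕ) (x : ℕ → ℂ) : Prop := ∀ i < N, MemD1 (fun n => x (n*N+i))

/-- The quadratic form `v ↦ ⟨M v, v⟩`. -/
def Qform (M : Matrix (Fin 2) (Fin 2) ℂ) (v : Fin 2 → ℂ) : ℂ :=
  dotProduct (star v) (M.mulVec v)

def Qgam (a b : ℕ → ℂ) (N : ℕ) (γ : ℂ) (n : ℕ) (z : ℂ) (v : Fin 2 → ℂ) : ℂ :=
  Qform (symQ ((a (n+N-1) / (γ * (‖a (n+N-1)‖ : ℂ))) • (Ematrix * transfer a b N n z))) v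

def Qtil (a b : ℕ → ℂ) (N : ℕ) (γ : ℂ) (n : ℕ) (z : ℂ) (v : Fin 2 → ℂ) : ℂ :=
  Qform (symQ ((a (n+N-1) / (γ * (‖a (n+N-1)‖ : ℂ)) *
      (starRingEnd ℂ) (a (n+N-1) / a (n-1))) • (Ematrix * mconj (transfer a b N n z)))) v

/-- The `N`-shifted Turán determinant, expressed via a generalised eigenvector `u`. -/
def Sdet (a b : ℕ → ℂ) (N : ℕ) (γ : ℂ) (z : ℂ) (u : ℕ → ℂ) (n : ℕ) : ℂ :=
  (‖a (n+N-1)‖ : ℂ) * Qgam a b N γ n z ![u (n-1), u n]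

/-- Uniform non-degeneracy of a family of quadratic forms. -/
def UnifNonDeg (K : Set ℂ) (Q : ℕ → ℂ → (Fin 2 → ℂ) → ℂ) : Prop :=
  ∃ c₁ > (0:ℝ), ∃ c₂ > (0:ℝ), ∃ M : ℕ, 1 ≤ M ∧
    ∀ v : Fin 2 → ℂ, ∀ z ∈ K, ∀ n, M ≤ n →
      c₁ * (‖v 0‖^2 + ‖v 1‖^2) ≤ ‖Q n z v‖ ∧ ‖Q n z v‖ ≤ c₂ * (‖v 0‖^2 + ‖v 1‖^2)

def RealEntries (X : Matrix (Fin 2) (Fin 2) ℂ) : Prop := ∀ p q, (X p q).im = 0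

def discr (X : Matrix (Fin 2) (Fin 2) ℂ) : ℂ := (Matrix.trace X)^2 - 4 * X.det

/-- Periodic one-step matrix `𝔅_j(x)` (real). -/
def pB (α β : ℤ → ℝ) (j : ℤ) (x : ℝ) : Matrix (Fin 2) (Fin 2) ℝ :=
  !![0, 1; -(α (j-1) / α j), (x - β j) / α j]

/-- Periodic transfer matrix `𝔛_i(x) = 𝔅_{i+N-1}(x) ⋯ 𝔅_i(x)`. -/
def pX (α β : ℤ → ℝ) (N : ℕ) (i : ℤ) (x : ℝ) : Matrix (Fin 2) (Fin 2) ℝ :=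
  (((List.range N).map fun j => pB α β (i + j) x).reverse).prod

/-- The generalised eigenvector with initial data `α`. -/
def gev (a b : ℕ → ℂ) (z : ℂ) (α : Fin 2 → ℂ) : ℕ → ℂ
  | 0 => α 0
  | 1 => α 1
  | n+2 => ((z - b (n+1)) * gev a b z α (n+1) - a n * gev a b z α n) / a (n+1)

end

theorem u_eq_gev (a b : ℕ → ℂ) (ha : ∀ n, a n ≠ 0) (z : ℂ) (u : ℕ → ℂ)
    (hu : ∀ n, 1 ≤ n → z * u n = a n * u (n+1) + b n * u n + a (n-1) * u (n-1)) :
    ∀ n, u n = gev a b z ![u 0, u 1] n := by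
  have h2 : ∀ n, u n = gev a b z ![u 0, u 1] n ∧ u (n+1) = gev a b z ![u 0, u 1] (n+1) := by
    intro n
    induction n with
    | zero => exact ⟨rfl, rfl⟩
    | succ k ih =>
      refine ⟨ih.2, ?_⟩
      have h := hu (k+1) (by omega)
      simp only [Nat.add_sub_cancel] at h
      show u (k+2) = gev a b z ![u 0, u 1] (k+2)
      rw [gev, ← ih.1, ← ih.2, eq_div_iff (ha (k+1))]
      linear_combination -h
  exact fun n => (h2 n).1

theorem gev_isGenEigen (a b : ℕ → ℂ) (ha : ∀ n, a n ≠ 0) (z : ℂ) (α : Fin 2 → ℂ)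
    (hα : ¬(α 0 = 0 ∧ α 1 = 0)) : IsGenEigen a b z (gev a b z α) := by
  refine ⟨hα, ?_⟩
  intro n hn
  obtain ⟨m, rfl⟩ : ∃ m, n = m + 1 := ⟨n-1, by omega⟩
  simp only [Nat.add_sub_cancel]
  show z * gev a b z α (m+1) = a (m+1) * gev a b z α (m+2) + b (m+1) * gev a b z α (m+1)
      + a m * gev a b z α m
  rw [gev, mul_div_cancel₀ _ (ha (m+1))]
  ring

theorem eig_not_both_zero (a b : ℕ → ℂ) (ha : ∀ n, a n ≠ 0) (z : ℂ) (u : ℕ → ℂ)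
    (hu : IsGenEigen a b z u) : ∀ k, ¬(u k = 0 ∧ u (k+1) = 0) := by
  intro k
  induction k with
  | zero => exact hu.1
  | succ m ih =>
    rintro ⟨h1, h2⟩
    apply ih
    have h := hu.2 (m+1) (by omega)
    simp only [Nat.add_sub_cancel, h1, h2, mul_zero, zero_add, add_zero] at h
    refine ⟨?_, h1⟩
    exact (mul_eq_zero.1 h.symm).resolve_left (ha m)

theorem gev_cont (a b : ℕ → ℂ) (n : ℕ) :
    Continuous (fun p : ℂ × (Fin 2 → ℂ) => gev a b p.1 p.2 n) := by
  induction n using Nat.strong_induction_on with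
  | _ n ih =>
    match n with
    | 0 => exact (continuous_apply 0).comp continuous_snd
    | 1 => exact (continuous_apply 1).comp continuous_snd
    | (k+2) =>
      show Continuous fun p : ℂ × (Fin 2 → ℂ) =>
        ((p.1 - b (k+1)) * gev a b p.1 p.2 (k+1) - a k * gev a b p.1 p.2 k) / a (k+1)
      exact (((continuous_fst.sub continuous_const).mul (ih (k+1) (by omega))).sub
        (continuous_const.mul (ih k (by omega)))).div_const _

set_option maxHeartbeats 2000000 in
open Filter Matrix Topology in
/-- Theorem 1: two-sided bounds on generalised eigenvectors from uniform
non-degeneracy and two-sided bounds on Turán determinants. -/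
theorem statement8
    (a b : ℕ → ℂ) (ha : ∀ n, a n ≠ 0)
    (N : ℕ) (hN : 1 ≤ N) (i : ℕ) (hi : i < N)
    (γ : ℂ) (hγ : ‖γ‖ = 1)
    (K : Set ℂ) (hK : IsCompact K)
    (hQ : UnifNonDeg K (fun n z v => Qgam a b N γ (n*N+i) z v))
    (hS : ∃ c₁ > (0:ℝ), ∃ c₂ > (0:ℝ), ∃ M : ℕ, 1 ≤ M ∧
      ∀ z ∈ K, ∀ u : ℕ → ℂ, IsGenEigen a b z u → ‖u 0‖^2 + ‖u 1‖^2 = 1 →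
        ∀ n, M ≤ n → c₁ ≤ ‖Sdet a b N γ z u n‖ ∧ ‖Sdet a b N γ z u n‖ ≤ c₂) :
    ∃ c : ℝ, 1 < c ∧ ∀ z ∈ K, ∀ n, 1 ≤ n → ∀ u : ℕ → ℂ, IsGenEigen a b z u →
      c⁻¹ * (‖u 0‖^2 + ‖u 1‖^2) ≤
        ‖a ((n+1)*N+i-1)‖ * (‖u (n*N+i-1)‖^2 + ‖u (n*N+i)‖^2) ∧
      ‖a ((n+1)*N+i-1)‖ * (‖u (n*N+i-1)‖^2 + ‖u (n*N+i)‖^2) ≤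
        c * (‖u 0‖^2 + ‖u 1‖^2) := by
  classical
  rcases K.eq_empty_or_nonempty with hKe | ⟨z₀, hz₀⟩
  · subst hKe
    exact ⟨2, one_lt_two, fun z hz => absurd hz (Set.notMem_empty z)⟩
  obtain ⟨q₁, hq₁, q₂, hq₂, MQ, hMQ1, hQb⟩ := hQ
  obtain ⟨s₁, hs₁, s₂, hs₂, MS, hMS1, hSb⟩ := hS
  set M₀ : ℕ := max MQ MS + 1 with hM₀def
  -- large n: uniform bounds for normalized eigenvectors
  have big : ∀ z ∈ K, ∀ u : ℕ → ℂ, IsGenEigen a b z u → ‖u 0‖^2 + ‖u 1‖^2 = 1 →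
      ∀ n, M₀ ≤ n →
      s₁ / q₂ ≤ ‖a ((n+1)*N+i-1)‖ * (‖u (n*N+i-1)‖^2 + ‖u (n*N+i)‖^2) ∧
      ‖a ((n+1)*N+i-1)‖ * (‖u (n*N+i-1)‖^2 + ‖u (n*N+i)‖^2) ≤ s₂ / q₁ := by
    intro z hz u hu hnorm n hn
    have hmS : MS ≤ n*N+i := by
      have : n ≤ n*N := Nat.le_mul_of_pos_right n (by omega)
      omega
    have hS' := hSb z hz u hu hnorm (n*N+i) hmS
    have hq' := hQb ![u (n*N+i-1), u (n*N+i)] z hz n (by omega)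
    simp only [Matrix.cons_val_zero, Matrix.cons_val_one, Matrix.head_cons] at hq'
    have hidx : n*N+i+N-1 = (n+1)*N+i-1 := by rw [add_mul, one_mul]; omega
    have hSdet : ‖Sdet a b N γ z u (n*N+i)‖
        = ‖a ((n+1)*N+i-1)‖ * ‖Qgam a b N γ (n*N+i) z ![u (n*N+i-1), u (n*N+i)]‖ := by
      rw [Sdet, norm_mul, Complex.norm_real, norm_norm, hidx]
    rw [hSdet] at hS'
    have haa : 0 < ‖a ((n+1)*N+i-1)‖ := norm_pos_iff.2 (ha _)
    constructor
    · rw [div_le_iff₀ hq₂]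
      nlinarith [mul_le_mul_of_nonneg_left hq'.2 haa.le, hS'.1]
    · rw [le_div_iff₀ hq₁]
      nlinarith [mul_le_mul_of_nonneg_left hq'.1 haa.le, hS'.2]
  -- the unit "sphere" is compact
  have Tcpt : IsCompact {α : Fin 2 → ℂ | ‖α 0‖^2 + ‖α 1‖^2 = 1} := by
    apply Metric.isCompact_of_isClosed_isBounded
    · exact isClosed_eq (by continuity) continuous_const
    · refine (Metric.isBounded_closedBall (x := (0 : Fin 2 → ℂ)) (r := 1)).subset ?_
      intro α hα
      simp only [Set.mem_setOf_eq] at hα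
      rw [Metric.mem_closedBall, dist_zero_right, pi_norm_le_iff_of_nonneg zero_le_one]
      intro j
      fin_cases j
      · show ‖α 0‖ ≤ 1
        nlinarith [norm_nonneg (α 0), sq_nonneg ‖α 1‖]
      · show ‖α 1‖ ≤ 1
        nlinarith [norm_nonneg (α 1), sq_nonneg ‖α 0‖]
  -- small n: per-n bounds by compactness
  have small : ∀ n : ℕ, 1 ≤ n → ∃ c : ℝ, 1 < c ∧ ∀ z ∈ K, ∀ u : ℕ → ℂ,
      IsGenEigen a b z u → ‖u 0‖^2 + ‖u 1‖^2 = 1 →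
      c⁻¹ ≤ ‖a ((n+1)*N+i-1)‖ * (‖u (n*N+i-1)‖^2 + ‖u (n*N+i)‖^2) ∧
      ‖a ((n+1)*N+i-1)‖ * (‖u (n*N+i-1)‖^2 + ‖u (n*N+i)‖^2) ≤ c := by
    intro n hn
    set m := n*N+i with hm
    have hm1 : 1 ≤ m := by
      have : n ≤ n*N := Nat.le_mul_of_pos_right n (by omega)
      omega
    set f : ℂ × (Fin 2 → ℂ) → ℝ :=
      fun p => ‖gev a b p.1 p.2 (m-1)‖^2 + ‖gev a b p.1 p.2 m‖^2 with hf
    have hfc : Continuous f :=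
      ((gev_cont a b (m-1)).norm.pow 2).add ((gev_cont a b m).norm.pow 2)
    have hScpt : IsCompact (K ×ˢ {α : Fin 2 → ℂ | ‖α 0‖^2 + ‖α 1‖^2 = 1}) := hK.prod Tcpt
    have hSne : (K ×ˢ {α : Fin 2 → ℂ | ‖α 0‖^2 + ‖α 1‖^2 = 1}).Nonempty :=
      ⟨(z₀, ![1, 0]), hz₀, by simp⟩
    obtain ⟨pmin, hpmin, hminle⟩ := hScpt.exists_isMinOn hSne hfc.continuousOn
    obtain ⟨pmax, hpmax, hmaxge⟩ := hScpt.exists_isMaxOn hSne hfc.continuousOn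
    have hεpos : 0 < f pmin := by
      have hα : ¬(pmin.2 0 = 0 ∧ pmin.2 1 = 0) := by
        rintro ⟨h0, h1⟩
        have h2 := hpmin.2
        simp only [Set.mem_setOf_eq, h0, h1, norm_zero] at h2
        norm_num at h2
      have hgev := gev_isGenEigen a b ha pmin.1 pmin.2 hα
      have hnb := eig_not_both_zero a b ha pmin.1 _ hgev (m-1)
      rw [Nat.sub_add_cancel hm1] at hnb
      simp only [hf]
      rcases not_and_or.1 hnb with h | h
      · have h' : 0 < ‖gev a b pmin.1 pmin.2 (m-1)‖ := norm_pos_iff.2 h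
        nlinarith [sq_nonneg ‖gev a b pmin.1 pmin.2 m‖]
      · have h' : 0 < ‖gev a b pmin.1 pmin.2 m‖ := norm_pos_iff.2 h
        nlinarith [sq_nonneg ‖gev a b pmin.1 pmin.2 (m-1)‖]
    have haa : 0 < ‖a ((n+1)*N+i-1)‖ := norm_pos_iff.2 (ha _)
    refine ⟨max 2 (max (‖a ((n+1)*N+i-1)‖ * f pmin)⁻¹ (‖a ((n+1)*N+i-1)‖ * f pmax)),
      lt_of_lt_of_le one_lt_two (le_max_left _ _), ?_⟩
    intro z hz u hu hnorm
    have hueq := u_eq_gev a b ha z u hu.2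
    have hmem : (z, ![u 0, u 1]) ∈ K ×ˢ {α : Fin 2 → ℂ | ‖α 0‖^2 + ‖α 1‖^2 = 1} := by
      refine ⟨hz, ?_⟩
      simp only [Set.mem_setOf_eq, Matrix.cons_val_zero, Matrix.cons_val_one, Matrix.head_cons]
      exact hnorm
    have hfval : f (z, ![u 0, u 1]) = ‖u (m-1)‖^2 + ‖u m‖^2 := by
      simp only [hf]
      rw [← hueq (m-1), ← hueq m]
    constructor
    · calc (max 2 (max (‖a ((n+1)*N+i-1)‖ * f pmin)⁻¹ (‖a ((n+1)*N+i-1)‖ * f pmax)))⁻¹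
          ≤ ((‖a ((n+1)*N+i-1)‖ * f pmin)⁻¹)⁻¹ := by
            refine inv_anti₀ (by positivity) ?_
            exact le_trans (le_max_left _ _) (le_max_right _ _)
      _ = ‖a ((n+1)*N+i-1)‖ * f pmin := inv_inv _
      _ ≤ ‖a ((n+1)*N+i-1)‖ * (‖u (m-1)‖^2 + ‖u m‖^2) := by
            rw [← hfval]; exact mul_le_mul_of_nonneg_left (hminle hmem) haa.le
    · calc ‖a ((n+1)*N+i-1)‖ * (‖u (m-1)‖^2 + ‖u m‖^2)
          ≤ ‖a ((n+1)*N+i-1)‖ * f pmax := by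
            rw [← hfval]; exact mul_le_mul_of_nonneg_left (hmaxge hmem) haa.le
      _ ≤ _ := le_trans (le_max_right _ _) (le_max_right _ _)
  -- choose per-n constants
  have hcf : ∀ n : ℕ, ∃ c : ℝ, 1 < c ∧ (1 ≤ n → ∀ z ∈ K, ∀ u : ℕ → ℂ,
      IsGenEigen a b z u → ‖u 0‖^2 + ‖u 1‖^2 = 1 →
      c⁻¹ ≤ ‖a ((n+1)*N+i-1)‖ * (‖u (n*N+i-1)‖^2 + ‖u (n*N+i)‖^2) ∧
      ‖a ((n+1)*N+i-1)‖ * (‖u (n*N+i-1)‖^2 + ‖u (n*N+i)‖^2) ≤ c) := by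
    intro n
    by_cases h : 1 ≤ n
    · obtain ⟨c, hc1, hc2⟩ := small n h
      exact ⟨c, hc1, fun _ => hc2⟩
    · exact ⟨2, one_lt_two, fun h' => absurd h' h⟩
  choose cf hcf1 hcf2 using hcf
  set c : ℝ := max (max 2 (max (q₂/s₁) (s₂/q₁)))
      ((((Finset.range M₀).sup fun k => ⌈cf k⌉₊) : ℕ) : ℝ) with hcdef
  refine ⟨c, lt_of_lt_of_le one_lt_two (le_trans (le_max_left _ _) (le_max_left _ _)), ?_⟩
  intro z hz n hn u hu
  have ht : 0 < ‖u 0‖^2 + ‖u 1‖^2 := by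
    rcases not_and_or.1 hu.1 with h | h
    · have h' : 0 < ‖u 0‖ := norm_pos_iff.2 h
      nlinarith [sq_nonneg ‖u 1‖]
    · have h' : 0 < ‖u 1‖ := norm_pos_iff.2 h
      nlinarith [sq_nonneg ‖u 0‖]
  set t := ‖u 0‖^2 + ‖u 1‖^2 with htdef
  set s := Real.sqrt t with hsdef
  have hspos : 0 < s := Real.sqrt_pos.2 ht
  have hs2 : s^2 = t := Real.sq_sqrt ht.le
  have hsne : (s : ℂ) ≠ 0 := Complex.ofReal_ne_zero.2 hspos.ne'
  set w : ℕ → ℂ := fun k => (s : ℂ)⁻¹ * u k with hwdef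
  have hwnorm : ∀ k, ‖w k‖^2 = s⁻¹^2 * ‖u k‖^2 := by
    intro k
    simp only [hwdef]
    rw [norm_mul, norm_inv, Complex.norm_real, Real.norm_of_nonneg hspos.le, mul_pow]
  have hwu : IsGenEigen a b z w := by
    constructor
    · rintro ⟨h0, h1⟩
      simp only [hwdef] at h0 h1
      exact hu.1 ⟨(mul_eq_zero.1 h0).resolve_left (inv_ne_zero hsne),
        (mul_eq_zero.1 h1).resolve_left (inv_ne_zero hsne)⟩
    · intro k hk
      have h := hu.2 k hk
      simp only [hwdef]
      linear_combination (s : ℂ)⁻¹ * h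
  have hwn1 : ‖w 0‖^2 + ‖w 1‖^2 = 1 := by
    rw [hwnorm 0, hwnorm 1, ← mul_add, ← htdef, inv_pow, hs2, inv_mul_cancel₀ ht.ne']
  have hA : ‖a ((n+1)*N+i-1)‖ * (‖u (n*N+i-1)‖^2 + ‖u (n*N+i)‖^2)
      = t * (‖a ((n+1)*N+i-1)‖ * (‖w (n*N+i-1)‖^2 + ‖w (n*N+i)‖^2)) := by
    rw [hwnorm, hwnorm, inv_pow, hs2]
    field_simp
  rcases le_or_gt M₀ n with hcase | hcase
  · have hb := big z hz w hwu hwn1 n hcase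
    have hc1 : q₂/s₁ ≤ c :=
      le_trans (le_trans (le_max_left _ _) (le_max_right _ _)) (le_max_left _ _)
    have hc2 : s₂/q₁ ≤ c :=
      le_trans (le_trans (le_max_right _ _) (le_max_right _ _)) (le_max_left _ _)
    have hinv : c⁻¹ ≤ s₁/q₂ := by
      have := inv_anti₀ (by positivity : (0:ℝ) < q₂/s₁) hc1
      rwa [inv_div] at this
      
    constructor
    · rw [hA]
      linarith [mul_le_mul_of_nonneg_right (hinv.trans hb.1) ht.le]
    · rw [hA]
      linarith [mul_le_mul_of_nonneg_right (hb.2.trans hc2) ht.le]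
  · have hb := hcf2 n hn z hz w hwu hwn1
    have hcfle : cf n ≤ c := by
      have h1 : (cf n : ℝ) ≤ (⌈cf n⌉₊ : ℝ) := Nat.le_ceil _
      have h2 : (⌈cf n⌉₊ : ℕ) ≤ (Finset.range M₀).sup fun k => ⌈cf k⌉₊ :=
        Finset.le_sup (f := fun k => ⌈cf k⌉₊) (Finset.mem_range.2 hcase)
      calc cf n ≤ (⌈cf n⌉₊ : ℝ) := h1
        _ ≤ ((((Finset.range M₀).sup fun k => ⌈cf k⌉₊) : ℕ) : ℝ) := by exact_mod_cast h2
        _ ≤ c := le_max_right _ _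
    have hinv : c⁻¹ ≤ (cf n)⁻¹ := inv_anti₀ (lt_trans one_pos (hcf1 n)) hcfle
    constructor
    · rw [hA]
      linarith [mul_le_mul_of_nonneg_right (hinv.trans hb.1) ht.le]
    · rw [hA]
      linarith [mul_le_mul_of_nonneg_right (hb.2.trans hcfle) ht.le]
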